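/- For a real random variable X with mean μ, variance σ², and β = Pr(X ≤ 0) ∈ (0,1), it holds that E[X⁺] ≤ μ(1 - β) + σ·sqrt(β(1 - β)), where X⁺ = max(X, 0). -/

import Mathlib

open MeasureTheory ProbabilityTheory Real

/-- Cauchy–Schwarz: `(∫ Y)² ≤ ν(univ) · ∫ Y²` for a finite measure. -/
lemma sq_integral_le_aux {α : Type*} {m : MeasurableSpace α} {ν : Measure α} [IsFiniteMeasure ν]
    {Y : α → ℝ} (hY : MemLp Y 2 ν) :
    (∫ a, Y a ∂ν) ^ 2 ≤ (ν Set.univ).toReal * ∫ a, Y a ^ 2 ∂ν := by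
  have hpq : Real.HolderConjugate 2 2 := Real.HolderConjugate.two_two
  have h2 : (ENNReal.ofReal (2 : ℝ)) = 2 := by norm_num
  have habs : |∫ a, Y a ∂ν| ≤ ∫ a, |Y a| ∂ν := by
    simpa [Real.norm_eq_abs] using norm_integral_le_integral_norm (μ := ν) Y
  have hmul : ∫ a, |Y a| * 1 ∂ν ≤
      (∫ a, |Y a| ^ (2 : ℝ) ∂ν) ^ (1 / (2 : ℝ)) * (∫ a, (1 : ℝ) ^ (2 : ℝ) ∂ν) ^ (1 / (2 : ℝ)) := by
    refine integral_mul_le_Lp_mul_Lq_of_nonneg hpq ?_ ?_ ?_ ?_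
    · exact Filter.Eventually.of_forall fun x => abs_nonneg _
    · exact Filter.Eventually.of_forall fun x => zero_le_one
    · rw [h2]; exact hY.abs
    · rw [h2]; exact memLp_const 1
  have e1 : ∫ a, |Y a| * 1 ∂ν = ∫ a, |Y a| ∂ν := by simp
  have e2 : ∫ a, |Y a| ^ (2 : ℝ) ∂ν = ∫ a, Y a ^ 2 ∂ν := by
    refine integral_congr_ae (Filter.Eventually.of_forall fun x => ?_)
    simp only [Real.rpow_two, sq_abs]
  have e3 : ∫ a, (1 : ℝ) ^ (2 : ℝ) ∂ν = (ν Set.univ).toReal := by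
    simp [Real.one_rpow, measureReal_def]
  rw [e1, e2, e3] at hmul
  have hSnn : 0 ≤ ∫ a, Y a ^ 2 ∂ν := integral_nonneg fun a => sq_nonneg _
  have hMnn : 0 ≤ (ν Set.univ).toReal := ENNReal.toReal_nonneg
  rw [← Real.sqrt_eq_rpow, ← Real.sqrt_eq_rpow] at hmul
  have hI : |∫ a, Y a ∂ν| ≤ Real.sqrt (∫ a, Y a ^ 2 ∂ν) * Real.sqrt ((ν Set.univ).toReal) :=
    habs.trans hmul
  calc (∫ a, Y a ∂ν) ^ 2 = |∫ a, Y a ∂ν| ^ 2 := (sq_abs _).symm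
    _ ≤ (Real.sqrt (∫ a, Y a ^ 2 ∂ν) * Real.sqrt ((ν Set.univ).toReal)) ^ 2 := by
        exact pow_le_pow_left₀ (abs_nonneg _) hI 2
    _ = (ν Set.univ).toReal * ∫ a, Y a ^ 2 ∂ν := by
        rw [mul_pow, Real.sq_sqrt hSnn, Real.sq_sqrt hMnn, mul_comm]

/-- With `β = Pr(X ≤ 0) ∈ (0,1)`, `E[X⁺] ≤ μ(1 - β) + σ·√(β(1 - β))`. -/
theorem expected_plus_le {Ω : Type*} [MeasureSpace Ω]
    [IsProbabilityMeasure (ℙ : Measure Ω)]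
    (X : Ω → ℝ) (μ σ β : ℝ)
    (hmeas : Measurable X) (hL2 : MemLp X 2 ℙ)
    (hmean : ∫ ω, X ω ∂ℙ = μ)
    (hvar : variance X ℙ = σ ^ 2) (hσ : 0 ≤ σ)
    (hβ : (ℙ {ω | X ω ≤ 0}).toReal = β)
    (hβ0 : 0 < β) (hβ1 : β < 1) :
    ∫ ω, max (X ω) 0 ∂ℙ ≤ μ * (1 - β) + σ * Real.sqrt (β * (1 - β)) := by
  set S : Set Ω := {ω | X ω ≤ 0} with hSdef
  have hSm : MeasurableSet S := hmeas measurableSet_Iic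
  set A : Set Ω := Sᶜ with hAdef
  have hAm : MeasurableSet A := hSm.compl
  have hPA : (ℙ A).toReal = 1 - β := by
    have h1 : ℙ A = 1 - ℙ S := by
      rw [hAdef, measure_compl hSm (measure_ne_top _ _), measure_univ]
    rw [h1, ENNReal.toReal_sub_of_le prob_le_one ENNReal.one_ne_top, ENNReal.toReal_one, hβ]
  -- centered variable
  have hYL2 : MemLp (fun ω => X ω - μ) 2 ℙ := hL2.sub (memLp_const μ)
  have hXint : Integrable X ℙ := hL2.integrable one_le_two
  have hYint : Integrable (fun ω => X ω - μ) ℙ := hYL2.integrable one_le_two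
  have hY2int : Integrable (fun ω => (X ω - μ) ^ 2) ℙ := hYL2.integrable_sq
  have hYmean : ∫ ω, (X ω - μ) ∂ℙ = 0 := by
    rw [integral_sub hXint (integrable_const μ), hmean, integral_const]
    simp
  have hvarY : ∫ ω, (X ω - μ) ^ 2 ∂ℙ = σ ^ 2 := by
    have h := variance_eq_integral hL2.aemeasurable
    rw [hvar] at h
    rw [h]
    refine integral_congr_ae (Filter.Eventually.of_forall fun ω => ?_)
    simp [hmean]
  set t := ∫ ω in A, (X ω - μ) ∂ℙ with htdef
  set a2 := ∫ ω in A, (X ω - μ) ^ 2 ∂ℙ with ha2def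
  set b2 := ∫ ω in S, (X ω - μ) ^ 2 ∂ℙ with hb2def
  have hsplit2 : a2 + b2 = σ ^ 2 := by
    have := integral_add_compl hAm hY2int
    rw [hAdef, compl_compl] at this
    rw [ha2def, hb2def, hAdef]
    rw [this, hvarY]
  have hsplit1 : t + ∫ ω in S, (X ω - μ) ∂ℙ = 0 := by
    have := integral_add_compl hAm hYint
    rw [hAdef, compl_compl] at this
    rw [htdef, hAdef, this, hYmean]
  have ha2nn : 0 ≤ a2 := integral_nonneg fun ω => sq_nonneg _
  have hb2nn : 0 ≤ b2 := integral_nonneg fun ω => sq_nonneg _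
  have ht1 : t ^ 2 ≤ (1 - β) * a2 := by
    have h := sq_integral_le_aux (hYL2.restrict A)
    rwa [Measure.restrict_apply_univ, hPA] at h
  have ht2 : t ^ 2 ≤ β * b2 := by
    have h := sq_integral_le_aux (hYL2.restrict S)
    rw [Measure.restrict_apply_univ, hβ] at h
    have hneg : ∫ ω in S, (X ω - μ) ∂ℙ = -t := by linarith
    rw [hneg, neg_sq] at h
    exact h
  have hkey : t ^ 2 ≤ β * (1 - β) * σ ^ 2 := by
    have e : β * ((1 - β) * a2) + (1 - β) * (β * b2) = β * (1 - β) * σ ^ 2 := by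
      rw [← hsplit2]; ring
    have p1 := mul_le_mul_of_nonneg_left ht1 hβ0.le
    have p2 := mul_le_mul_of_nonneg_left ht2 (sub_nonneg.2 hβ1.le)
    nlinarith [sq_nonneg t]
  have htle : t ≤ σ * Real.sqrt (β * (1 - β)) := by
    have h1 : t ≤ |t| := le_abs_self t
    have h2 : |t| = Real.sqrt (t ^ 2) := (Real.sqrt_sq_eq_abs t).symm
    have h3 : Real.sqrt (t ^ 2) ≤ Real.sqrt (β * (1 - β) * σ ^ 2) := Real.sqrt_le_sqrt hkey
    have h4 : Real.sqrt (β * (1 - β) * σ ^ 2) = Real.sqrt (β * (1 - β)) * σ := by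
      rw [Real.sqrt_mul (by nlinarith : (0:ℝ) ≤ β * (1 - β)), Real.sqrt_sq hσ]
    calc t ≤ |t| := h1
      _ = Real.sqrt (t ^ 2) := h2
      _ ≤ Real.sqrt (β * (1 - β)) * σ := h4 ▸ h3
      _ = σ * Real.sqrt (β * (1 - β)) := mul_comm _ _
  -- identify the left-hand side
  have hLHS : ∫ ω, max (X ω) 0 ∂ℙ = t + μ * (1 - β) := by
    have hind : (fun ω => max (X ω) 0) = A.indicator X := by
      funext ω
      by_cases h : X ω ≤ 0
      · have : ω ∉ A := by simp [hAdef, hSdef, h]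
        simp [Set.indicator_of_notMem this, max_eq_right h]
      · have : ω ∈ A := by simp [hAdef, hSdef, h]
        simp [Set.indicator_of_mem this, max_eq_left (le_of_lt (not_le.mp h))]
    rw [hind, integral_indicator hAm]
    have : ∫ ω in A, X ω ∂ℙ = ∫ ω in A, ((X ω - μ) + μ) ∂ℙ := by
      refine integral_congr_ae (Filter.Eventually.of_forall fun ω => ?_)
      ring
    rw [this, integral_add (hYint.restrict) (integrable_const μ), integral_const,
      measureReal_def, Measure.restrict_apply_univ, hPA]
    simp [htdef, mul_comm]
  rw [hLHS]
  linarith
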